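/- For every positive integer n, Σ_{d² ∣ n} μ(d) σ(n/d²) = n · Π_{p ∣ n prime} (1 + 1/p), where σ is the sum-of-divisors function. -/

import Mathlib

open ArithmeticFunction Finset

noncomputable def sqMoe : ArithmeticFunction ℤ :=
  ⟨fun n => if IsSquare n then moebius n.sqrt else 0, by simp⟩

lemma sqMoe_apply (n : ℕ) : sqMoe n = if IsSquare n then moebius n.sqrt else 0 := rfl

lemma sqMoe_mult : sqMoe.IsMultiplicative := by
  constructor
  · simp [sqMoe_apply]
  · intro m n h
    rcases eq_or_ne m 0 with rfl | hm
    · simp at h; simp [h, sqMoe_apply]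
    rcases eq_or_ne n 0 with rfl | hn0
    · simp at h; simp [h, sqMoe_apply]
    by_cases hs : IsSquare (m * n)
    · obtain ⟨c, hc⟩ := hs
      have hmn : m * n = c ^ 2 := by rw [hc]; ring
      obtain ⟨a, ha⟩ : ∃ a, m = a ^ 2 :=
        exists_eq_pow_of_mul_eq_pow (by rw [Nat.isUnit_iff]; exact h) hmn
      obtain ⟨b, hb⟩ : ∃ b, n = b ^ 2 :=
        exists_eq_pow_of_mul_eq_pow (by rw [Nat.isUnit_iff]; exact h.symm) (by rw [mul_comm]; exact hmn)
      have hab : a.Coprime b := by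
        have := h
        rw [ha, hb] at this
        exact (Nat.coprime_pow_left_iff two_pos _ _).mp ((Nat.coprime_pow_right_iff two_pos _ _).mp this)
      subst ha hb
      rw [sqMoe_apply, sqMoe_apply, sqMoe_apply, if_pos ⟨a*b, by ring⟩,
        if_pos ⟨a, sq a⟩, if_pos ⟨b, sq b⟩]
      rw [show a ^ 2 * b ^ 2 = (a*b)^2 by ring, Nat.sqrt_eq', Nat.sqrt_eq', Nat.sqrt_eq']
      exact isMultiplicative_moebius.2 hab
    · rw [sqMoe_apply, if_neg hs]
      by_cases h1 : IsSquare m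
      · have h2 : ¬ IsSquare n := fun h2 => hs (h1.mul h2)
        rw [sqMoe_apply n, if_neg h2, mul_zero]
      · rw [sqMoe_apply m, if_neg h1, zero_mul]

lemma isSquare_prime_pow_iff {p j : ℕ} (hp : p.Prime) : IsSquare (p ^ j) ↔ Even j := by
  constructor
  · rintro ⟨c, hc⟩
    have hcd : c ∣ p ^ j := ⟨c, hc⟩
    obtain ⟨i, hi, rfl⟩ := (Nat.dvd_prime_pow hp).mp hcd
    rw [← pow_add] at hc
    have := Nat.pow_right_injective hp.two_le hc
    exact this ▸ ⟨i, rfl⟩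
  · rintro ⟨i, rfl⟩
    exact ⟨p ^ i, by rw [← pow_add]⟩

lemma sqMoe_prime_pow {p : ℕ} (hp : p.Prime) (j : ℕ) :
    sqMoe (p ^ j) = if j = 0 then 1 else if j = 2 then -1 else 0 := by
  rw [sqMoe_apply]
  by_cases he : Even j
  · obtain ⟨i, rfl⟩ := he
    rw [if_pos ((isSquare_prime_pow_iff hp).mpr ⟨i, rfl⟩)]
    rw [show p ^ (i + i) = (p ^ i) ^ 2 by ring, Nat.sqrt_eq']
    rcases Nat.eq_zero_or_pos i with rfl | hi
    · simp
    rcases eq_or_lt_of_le (show 1 ≤ i from hi) with h1 | h2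
    · simp only [← h1, pow_one, moebius_apply_prime hp]
      norm_num
    · rw [moebius_apply_prime_pow hp hi.ne', if_neg (by omega), if_neg (by omega),
        if_neg (by omega)]
  · rw [if_neg (fun h => he ((isSquare_prime_pow_iff hp).mp h)),
      if_neg (by rintro rfl; exact he Even.zero), if_neg (by rintro rfl; exact he (by norm_num))]

noncomputable def Fpsi : ArithmeticFunction ℤ := sqMoe * ↑(ArithmeticFunction.sigma 1)

lemma Fpsi_mult : Fpsi.IsMultiplicative :=
  sqMoe_mult.mul isMultiplicative_sigma.natCast

lemma sigma_prime_pow_int {p : ℕ} (hp : p.Prime) (k : ℕ) :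
    ((ArithmeticFunction.sigma 1 (p ^ k) : ℕ) : ℤ) = ∑ i ∈ range (k + 1), (p : ℤ) ^ i := by
  rw [sigma_one_apply]
  push_cast [Nat.sum_divisors_prime_pow hp]
  rfl

lemma Fpsi_prime_pow {p : ℕ} (hp : p.Prime) {k : ℕ} (hk : k ≠ 0) :
    Fpsi (p ^ k) = (p : ℤ) ^ k + (p : ℤ) ^ (k - 1) := by
  rw [Fpsi, mul_apply]
  simp only [natCoe_apply]
  rw [Nat.sum_divisorsAntidiagonal (fun a b => sqMoe a * ((ArithmeticFunction.sigma 1 b : ℕ) : ℤ)),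
    Nat.sum_divisors_prime_pow hp]
  have hstep : ∀ j ∈ range (k + 1),
      sqMoe (p ^ j) * ((ArithmeticFunction.sigma 1 : ArithmeticFunction ℕ) (p ^ k / p ^ j) : ℤ)
        = (if j = 0 then ((ArithmeticFunction.sigma 1 (p ^ (k - j)) : ℕ) : ℤ) else 0)
          + (if j = 2 then -((ArithmeticFunction.sigma 1 (p ^ (k - j)) : ℕ) : ℤ) else 0) := by
    intro j hj
    rw [mem_range] at hj
    rw [Nat.pow_div (by omega) hp.pos, sqMoe_prime_pow hp]
    split_ifs <;> simp_all
  rw [Finset.sum_congr rfl hstep, Finset.sum_add_distrib, Finset.sum_ite_eq' (range (k+1)),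
    Finset.sum_ite_eq' (range (k+1)), if_pos (by simp : (0:ℕ) ∈ range (k+1))]
  rcases Nat.lt_or_ge k 2 with h2 | h2
  · interval_cases k
    · omega
    · rw [if_neg (by simp), sigma_prime_pow_int hp]
      simp [Finset.sum_range_succ]
      ring
  · obtain ⟨m, rfl⟩ : ∃ m, k = m + 2 := ⟨k - 2, by omega⟩
    rw [if_pos (Finset.mem_range.mpr (by omega)), sigma_prime_pow_int hp, sigma_prime_pow_int hp]
    simp only [Nat.add_sub_cancel, Nat.sub_zero]
    rw [show m + 2 + 1 = (m + 1) + 1 + 1 by ring, Finset.sum_range_succ, Finset.sum_range_succ _ (m+1),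
      show m + 2 - 1 = m + 1 from rfl]
    ring

lemma sum_eq_Fpsi {n : ℕ} (hn : 0 < n) :
    ∑ d ∈ n.divisors.filter (fun d => d ^ 2 ∣ n),
      (moebius d : ℤ) * ((ArithmeticFunction.sigma 1 (n / d ^ 2) : ℕ) : ℤ) = Fpsi n := by
  rw [Fpsi, mul_apply]
  simp only [natCoe_apply]
  rw [Nat.sum_divisorsAntidiagonal (fun a b => sqMoe a * ((ArithmeticFunction.sigma 1 b : ℕ) : ℤ))]
  rw [← Finset.sum_filter_of_ne (s := n.divisors) (p := fun a => IsSquare a)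
    (by intro a _ h; by_contra hs; exact h (by rw [sqMoe_apply, if_neg hs, zero_mul]))]
  apply Finset.sum_nbij' (i := fun d => d ^ 2) (j := Nat.sqrt)
  · intro d hd
    simp only [Finset.mem_filter, Nat.mem_divisors] at hd ⊢
    exact ⟨⟨hd.2, hn.ne'⟩, ⟨d, by ring⟩⟩
  · intro a ha
    simp only [Finset.mem_filter, Nat.mem_divisors] at ha ⊢
    obtain ⟨⟨hdvd, _⟩, c, hc⟩ := ha
    have hc2 : a = c ^ 2 := by rw [hc]; ring
    subst hc2
    rw [Nat.sqrt_eq']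
    exact ⟨⟨dvd_trans (dvd_pow_self c two_ne_zero) hdvd, hn.ne'⟩, hdvd⟩
  · intro d _; exact Nat.sqrt_eq' d
  · intro a ha
    simp only [Finset.mem_filter] at ha
    obtain ⟨_, c, hc⟩ := ha
    have hc2 : a = c ^ 2 := by rw [hc]; ring
    subst hc2; rw [Nat.sqrt_eq']
  · intro d _
    rw [sqMoe_apply, if_pos ⟨d, by ring⟩, Nat.sqrt_eq']

theorem stmt_9 (n : ℕ) (hn : 0 < n) :
    ∑ d ∈ n.divisors.filter (fun d => d ^ 2 ∣ n),
        (ArithmeticFunction.moebius d : ℝ) * (ArithmeticFunction.sigma 1 (n / d ^ 2) : ℝ) =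
      (n : ℝ) * ∏ p ∈ n.primeFactors, (1 + 1 / (p : ℝ)) := by
  have hne : n ≠ 0 := hn.ne'
  have h2 : Fpsi n = ∏ p ∈ n.primeFactors,
      ((p : ℤ) ^ (n.factorization p) + (p : ℤ) ^ (n.factorization p - 1)) := by
    rw [Fpsi_mult.multiplicative_factorization _ hne, Finsupp.prod]
    rw [Nat.support_factorization]
    refine Finset.prod_congr rfl (fun p hp => ?_)
    have hpk : n.factorization p ≠ 0 := by
      rw [← Nat.support_factorization, Finsupp.mem_support_iff] at hp
      exact hp
    rw [← Nat.support_factorization, Finsupp.mem_support_iff] at hp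
    exact Fpsi_prime_pow (Nat.prime_of_mem_primeFactors (by
      rw [← Nat.support_factorization]; exact Finsupp.mem_support_iff.mpr hp)) hpk
  have hL : (∑ d ∈ n.divisors.filter (fun d => d ^ 2 ∣ n),
        (ArithmeticFunction.moebius d : ℝ) * (ArithmeticFunction.sigma 1 (n / d ^ 2) : ℝ))
      = ((Fpsi n : ℤ) : ℝ) := by
    rw [← sum_eq_Fpsi hn]
    push_cast
    rfl
  rw [hL, h2]
  push_cast
  have hR : (n : ℝ) = ∏ p ∈ n.primeFactors, (p : ℝ) ^ (n.factorization p) := by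
    conv_lhs => rw [← Nat.factorization_prod_pow_eq_self hne]
    rw [Finsupp.prod, Nat.support_factorization]
    push_cast
    rfl
  rw [hR, ← Finset.prod_mul_distrib]
  refine Finset.prod_congr rfl (fun p hp => ?_)
  have hpp : p.Prime := Nat.prime_of_mem_primeFactors hp
  have hp0 : (p : ℝ) ≠ 0 := Nat.cast_ne_zero.mpr hpp.pos.ne'
  have hk : n.factorization p ≠ 0 := by
    rw [← Nat.support_factorization, Finsupp.mem_support_iff] at hp
    exact hp
  obtain ⟨m, hm⟩ : ∃ m, n.factorization p = m + 1 := ⟨n.factorization p - 1, by omega⟩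
  rw [hm]
  simp only [Nat.add_sub_cancel]
  field_simp
  ring
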